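/- Thompson's group F satisfies no group law: for every k ≥ 1 and every nontrivial element w of the free group on k generators, there exist f_1, …, f_k ∈ F such that the evaluation w(f_1, …, f_k) is not the identity map of [0,1]. -/

import Mathlib

open Set

/-- The closed unit interval `[0,1] ⊆ ℝ`. -/
abbrev unitInt : Set ℝ := Set.Icc (0 : ℝ) 1

/-- A real number is dyadic if it has the form `a / 2 ^ b` with `a : ℤ`, `b : ℕ`. -/
def IsDyadic (x : ℝ) : Prop := ∃ (a : ℤ) (b : ℕ), x = (a : ℝ) / 2 ^ b

/-- A bijection of `[0,1]` belongs to Thompson's group `F` if it is an increasing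
homeomorphism of `[0,1]` which is piecewise affine with finitely many dyadic
breakpoints `0 = t_0 < t_1 < ⋯ < t_r = 1` and slopes integer powers of `2`. -/
def IsThompson (f : Equiv.Perm unitInt) : Prop :=
  (∀ x y : unitInt, (x : ℝ) < y → (f x : ℝ) < f y) ∧
  Continuous (fun x : unitInt => f x) ∧
  ∃ (r : ℕ) (t : Fin (r + 1) → ℝ), StrictMono t ∧ t 0 = 0 ∧ t (Fin.last r) = 1 ∧
    (∀ i, IsDyadic (t i)) ∧
    ∀ i : Fin r, ∃ (m : ℤ) (c : ℝ), ∀ x : unitInt,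
      (x : ℝ) ∈ Set.Icc (t i.castSucc) (t i.succ) → (f x : ℝ) = 2 ^ m * x + c

/-- Thompson's group `F` satisfies no group law: for every `k ≥ 1` and every
nontrivial word `w` in the free group on `k` generators there exist elements
`f_1, …, f_k` of `F` whose evaluation `w(f_1, …, f_k)` is not the identity map
of `[0,1]`. -/
lemma isDyadic_zero : IsDyadic 0 := ⟨0, 0, by norm_num⟩

lemma IsDyadic.add {x y : ℝ} (hx : IsDyadic x) (hy : IsDyadic y) : IsDyadic (x + y) := by
  obtain ⟨a, b, rfl⟩ := hx; obtain ⟨c, d, rfl⟩ := hy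
  refine ⟨a * 2 ^ d + c * 2 ^ b, b + d, ?_⟩
  have h2b : ((2:ℝ)) ^ b ≠ 0 := by positivity
  have h2d : ((2:ℝ)) ^ d ≠ 0 := by positivity
  push_cast
  rw [pow_add, div_add_div _ _ h2b h2d, div_eq_div_iff (by positivity) (by positivity)]
  ring

lemma IsDyadic.neg {x : ℝ} (hx : IsDyadic x) : IsDyadic (-x) := by
  obtain ⟨a, b, rfl⟩ := hx; exact ⟨-a, b, by push_cast; ring⟩

lemma IsDyadic.sub {x y : ℝ} (hx : IsDyadic x) (hy : IsDyadic y) : IsDyadic (x - y) := by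
  rw [sub_eq_add_neg]; exact hx.add hy.neg

lemma IsDyadic.zpow_mul {x : ℝ} (hx : IsDyadic x) (z : ℤ) : IsDyadic ((2 : ℝ) ^ z * x) := by
  obtain ⟨a, b, rfl⟩ := hx
  obtain ⟨n, rfl | rfl⟩ := z.eq_nat_or_neg
  · refine ⟨a * 2 ^ n, b, ?_⟩
    push_cast [zpow_natCast]
    ring
  · refine ⟨a, b + n, ?_⟩
    rw [zpow_neg, zpow_natCast, pow_add, inv_mul_eq_div, div_div]

lemma gap_subdiv {A B : ℝ} (hA : 0 < A) (hB : 0 < B) (hdA : IsDyadic A) (hdB : IsDyadic B) :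
    ∃ u v : ℝ, 0 < u ∧ u < A ∧ 0 < v ∧ v < B ∧ IsDyadic u ∧
      (∃ s : ℤ, v = 2 ^ s * u) ∧ (∃ t : ℤ, B - v = 2 ^ t * (A - u)) := by
  by_cases hc : ∃ m : ℤ, B = 2 ^ m * A
  · obtain ⟨m, hm⟩ := hc
    refine ⟨A / 2, B / 2, by linarith, by linarith, by linarith, by linarith, ?_, ⟨m, by rw [hm]; ring⟩,
      ⟨m, by rw [hm]; ring⟩⟩
    have := hdA.zpow_mul (-1)
    simpa [zpow_neg, div_eq_inv_mul] using this
  · set t : ℤ := Int.log 2 (B / A) with ht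
    have h1 : (2 : ℝ) ^ t ≤ B / A := Int.zpow_log_le_self (by norm_num) (by positivity)
    have h2 : B / A < 2 ^ (t + 1) := Int.lt_zpow_succ_log_self (by norm_num) _
    have h1' : (2 : ℝ) ^ t * A ≤ B := by
      exact (le_div_iff₀ hA).mp h1
    have h1s : (2 : ℝ) ^ t * A < B := by
      rcases lt_or_eq_of_le h1' with h | h
      · exact h
      · exact absurd ⟨t, h.symm⟩ hc
    have h2' : B < 2 ^ (t + 1) * A := by
      rw [zpow_add_one₀ (by norm_num : (2:ℝ) ≠ 0)] at h2 ⊢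
      have := (div_lt_iff₀ hA).mp h2
      linarith
    refine ⟨2 ^ (-t) * B - A, 2 * B - 2 ^ (t + 1) * A, ?_, ?_, ?_, ?_, ?_, ⟨t + 1, ?_⟩, ⟨t, ?_⟩⟩
    · have : A < 2 ^ (-t) * B := by
        rw [zpow_neg]
        rw [lt_inv_mul_iff₀ (by positivity)]
        linarith
      linarith
    · have : (2 : ℝ) ^ (-t) * B < 2 * A := by
        rw [zpow_neg, inv_mul_lt_iff₀ (by positivity)]
        calc B < 2 ^ (t+1) * A := h2'
        _ = 2 ^ t * (2 * A) := by rw [zpow_add_one₀ (by norm_num : (2:ℝ) ≠ 0)]; ring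
      linarith
    · have h23 : (2:ℝ) ^ (t+1) = 2 * 2 ^ t := by
        rw [zpow_add_one₀ (by norm_num : (2:ℝ) ≠ 0)]; ring
      rw [h23]; nlinarith [h1s]
    · linarith
    · exact (hdB.zpow_mul (-t)).sub hdA
    · have : (2:ℝ) ^ (t+1) * 2 ^ (-t) = 2 := by
        rw [← zpow_add₀ (by norm_num : (2:ℝ) ≠ 0)]; norm_num
      calc 2 * B - 2 ^ (t+1) * A = 2 ^ (t+1) * 2 ^ (-t) * B - 2 ^ (t+1) * A := by rw [this]
      _ = 2 ^ (t+1) * (2 ^ (-t) * B - A) := by ring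
    · have h22 : (2:ℝ) ^ t * 2 ^ (-t) = 1 := by
        rw [← zpow_add₀ (by norm_num : (2:ℝ) ≠ 0)]; norm_num
      have h23 : (2:ℝ) ^ (t+1) = 2 * 2 ^ t := by
        rw [zpow_add_one₀ (by norm_num : (2:ℝ) ≠ 0)]; ring
      calc B - (2 * B - 2 ^ (t+1) * A) = 2 ^ (t+1) * A - B := by ring
      _ = 2 ^ t * (A - (2 ^ (-t) * B - A)) := by
          rw [h23]; nlinarith [h22]

lemma exists_piece {r : ℕ} {t : Fin (r+1) → ℝ} (ht : StrictMono t) (ht0 : t 0 = 0)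
    (htl : t (Fin.last r) = 1) {x : ℝ} (hx0 : 0 ≤ x) (hx1 : x < 1) :
    ∃ l : Fin r, t l.castSucc ≤ x ∧ x < t l.succ := by
  classical
  have hS : (Finset.univ.filter (fun i : Fin (r+1) => t i ≤ x)).Nonempty :=
    ⟨0, by simp [ht0, hx0]⟩
  set j := Finset.max' _ hS with hj
  have hjx : t j ≤ x := (Finset.mem_filter.mp (Finset.max'_mem _ hS)).2
  have hjr : (j : ℕ) < r := by
    rcases lt_or_eq_of_le (Nat.lt_succ_iff.mp j.isLt) with h | h
    · exact h
    · exfalso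
      have : j = Fin.last r := Fin.ext h
      rw [this, htl] at hjx; linarith
  refine ⟨⟨(j : ℕ), hjr⟩, ?_, ?_⟩
  · have : (⟨(j : ℕ), hjr⟩ : Fin r).castSucc = j := by
      apply Fin.ext; simp
    rw [this]; exact hjx
  · by_contra h
    push_neg at h
    have hmem : (⟨(j : ℕ), hjr⟩ : Fin r).succ ∈
        Finset.univ.filter (fun i : Fin (r+1) => t i ≤ x) := by
      simp only [Finset.mem_filter, Finset.mem_univ, true_and]; exact h
    have := Finset.le_max' _ _ hmem
    rw [← hj] at this
    have hlt : j < (⟨(j : ℕ), hjr⟩ : Fin r).succ := by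
      rw [Fin.lt_def]; simp
    exact absurd this (not_le.mpr hlt)

lemma thompson_of_seq {r : ℕ} (t u : Fin (r+1) → ℝ) (ht : StrictMono t)
    (ht0 : t 0 = 0) (htl : t (Fin.last r) = 1) (hu0 : u 0 = 0) (hul : u (Fin.last r) = 1)
    (hd : ∀ i, IsDyadic (t i))
    (hs : ∀ l : Fin r, ∃ m : ℤ, u l.succ - u l.castSucc = 2 ^ m * (t l.succ - t l.castSucc)) :
    ∃ f : Equiv.Perm unitInt, IsThompson f ∧
      ∀ (x : unitInt) (i : Fin (r+1)), (x : ℝ) = t i → ((f x : ℝ) = u i) := by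
  classical
  choose s hsp using hs
  set cl : ℝ → Fin r → ℝ := fun x l => max (t l.castSucc) (min x (t l.succ)) with hcl
  set F : ℝ → ℝ := fun x => ∑ l : Fin r, 2 ^ (s l) * (cl x l - t l.castSucc) with hF
  have hpos : ∀ l : Fin r, (0:ℝ) < 2 ^ (s l) := fun l => zpow_pos (by norm_num) _
  have htc : ∀ l : Fin r, t l.castSucc < t l.succ := fun l => ht (Fin.castSucc_lt_succ (i := l))
  have hcl_mono : ∀ (l : Fin r) (x y : ℝ), x ≤ y → cl x l ≤ cl y l := by
    intro l x y hxy
    exact max_le_max le_rfl (min_le_min hxy le_rfl)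
  have hmono : Monotone F := by
    intro x y hxy
    apply Finset.sum_le_sum
    intro l _
    have := hcl_mono l x y hxy
    nlinarith [hpos l]
  have clA : ∀ (l' l : Fin r), (l' : ℕ) < l → ∀ z, t l.castSucc ≤ z → cl z l' = t l'.succ := by
    intro l' l h z hz
    have hle : t l'.succ ≤ t l.castSucc := by
      apply ht.monotone
      rw [Fin.le_def]
      simp only [Fin.val_succ, Fin.coe_castSucc]
      omega
    rw [hcl]; dsimp only
    rw [min_eq_right (le_trans hle hz), max_eq_right (htc l').le]
  have clB : ∀ (l' l : Fin r), (l : ℕ) < l' → ∀ z, z ≤ t l.succ → cl z l' = t l'.castSucc := by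
    intro l' l h z hz
    have hle : t l.succ ≤ t l'.castSucc := by
      apply ht.monotone
      rw [Fin.le_def]
      simp only [Fin.val_succ, Fin.coe_castSucc]
      omega
    rw [hcl]; dsimp only
    rw [min_eq_left (le_trans hz (le_trans hle (htc l').le)), max_eq_left (le_trans hz hle)]
  have clC : ∀ (l : Fin r) (z : ℝ), t l.castSucc ≤ z → z ≤ t l.succ → cl z l = z := by
    intro l z h1 h2
    rw [hcl]; dsimp only
    rw [min_eq_left h2, max_eq_right h1]
  have hpiece : ∀ (l : Fin r) (x : ℝ), t l.castSucc ≤ x → x ≤ t l.succ →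
      F x = F (t l.castSucc) + 2 ^ (s l) * (x - t l.castSucc) := by
    intro l x hx1 hx2
    have key : F x - F (t l.castSucc) = 2 ^ (s l) * (x - t l.castSucc) := by
      rw [hF]; dsimp only
      rw [← Finset.sum_sub_distrib]
      have e0 : ∀ l' : Fin r, 2 ^ (s l') * (cl x l' - t l'.castSucc) -
          2 ^ (s l') * (cl (t l.castSucc) l' - t l'.castSucc)
          = 2 ^ (s l') * (cl x l' - cl (t l.castSucc) l') := by intro l'; ring
      rw [Finset.sum_congr rfl (fun l' _ => e0 l')]
      rw [Finset.sum_eq_single l]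
      · rw [clC l x hx1 hx2, clC l (t l.castSucc) le_rfl (htc l).le]
      · intro l' _ hne
        rcases hne.lt_or_gt with h | h
        · rw [clA l' l h x hx1, clA l' l h (t l.castSucc) le_rfl, sub_self, mul_zero]
        · rw [clB l' l h x hx2, clB l' l h (t l.castSucc) (htc l).le, sub_self, mul_zero]
      · intro h; exact absurd (Finset.mem_univ l) h
    linarith
  have hnode : ∀ i : Fin (r+1), F (t i) = u i := by
    intro i
    induction i using Fin.induction with
    | zero =>
      rw [hF]; dsimp only
      rw [hu0]
      apply Finset.sum_eq_zero
      intro l _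
      have : cl (t 0) l = t l.castSucc := by
        rw [hcl]; dsimp only
        have h1 : t 0 ≤ t l.succ := ht.monotone (Fin.zero_le _)
        have h2 : t 0 ≤ t l.castSucc := ht.monotone (Fin.zero_le _)
        rw [min_eq_left h1, max_eq_left h2]
      rw [this, sub_self, mul_zero]
    | succ l ih =>
      rw [hpiece l (t l.succ) (htc l).le le_rfl, ih]
      have := hsp l
      linarith
  have hF0 : F 0 = 0 := by
    have := hnode 0; rw [ht0, hu0] at this; exact this
  have hF1 : F 1 = 1 := by
    have := hnode (Fin.last r); rw [htl, hul] at this; exact this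
  have hstrict : ∀ x y : ℝ, 0 ≤ x → x < y → y ≤ 1 → F x < F y := by
    intro x y hx hxy hy
    obtain ⟨l, hl1, hl2⟩ := exists_piece ht ht0 htl hx (lt_of_lt_of_le hxy hy)
    have : 0 < F y - F x := by
      rw [hF]; dsimp only
      rw [← Finset.sum_sub_distrib]
      apply Finset.sum_pos'
      · intro l' _
        have := hcl_mono l' x y hxy.le
        nlinarith [hpos l']
      · refine ⟨l, Finset.mem_univ l, ?_⟩
        have e1 : cl x l = x := clC l x hl1 hl2.le
        have e2 : x < cl y l := by
          rw [hcl]; dsimp only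
          exact lt_of_lt_of_le (lt_min hxy hl2) (le_max_right _ _)
        nlinarith [hpos l]
    linarith
  have hcont : Continuous F := by
    rw [hF]
    apply continuous_finset_sum
    intro l _
    exact (continuous_const.mul (((continuous_const.max
      (continuous_id.min continuous_const))).sub continuous_const))
  have hmaps : ∀ x : ℝ, x ∈ unitInt → F x ∈ unitInt := by
    intro x hx
    constructor
    · rw [← hF0]; exact hmono hx.1
    · rw [← hF1]; exact hmono hx.2
  have hsurj : ∀ y : ℝ, y ∈ unitInt → ∃ x, x ∈ unitInt ∧ F x = y := by
    intro y hy
    have hsub := intermediate_value_Icc (by norm_num : (0:ℝ) ≤ 1) hcont.continuousOn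
    rw [hF0, hF1] at hsub
    obtain ⟨x, hx, hfx⟩ := hsub hy
    exact ⟨x, hx, hfx⟩
  set G : unitInt → unitInt := fun x => ⟨F x, hmaps x x.2⟩ with hG
  have hGinj : Function.Injective G := by
    intro x y hxy
    by_contra hne
    have hne' : (x : ℝ) ≠ (y : ℝ) := fun h => hne (Subtype.ext h)
    have hval : F x = F y := congrArg Subtype.val hxy
    rcases hne'.lt_or_gt with h | h
    · exact absurd hval (ne_of_lt (hstrict _ _ x.2.1 h y.2.2))
    · exact absurd hval.symm (ne_of_lt (hstrict _ _ y.2.1 h x.2.2))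
  have hGsurj : Function.Surjective G := by
    intro y
    obtain ⟨x, hx, hfx⟩ := hsurj y y.2
    exact ⟨⟨x, hx⟩, Subtype.ext hfx⟩
  refine ⟨Equiv.ofBijective G ⟨hGinj, hGsurj⟩, ⟨?_, ?_, r, t, ht, ht0, htl, hd, ?_⟩, ?_⟩
  · intro x y h
    exact hstrict _ _ x.2.1 h y.2.2
  · exact (hcont.comp continuous_subtype_val).subtype_mk _
  · intro l
    refine ⟨s l, u l.castSucc - 2 ^ (s l) * t l.castSucc, ?_⟩
    intro x hx
    show F x = _
    rw [hpiece l x hx.1 hx.2, hnode l.castSucc]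
    ring
  · intro x i hxi
    show F x = u i
    rw [hxi]
    exact hnode i

lemma thompson_interp {m : ℕ} (a b : Fin (m+1) → ℝ) (ha : StrictMono a) (hb : StrictMono b)
    (ha0 : a 0 = 0) (hal : a (Fin.last m) = 1) (hb0 : b 0 = 0) (hbl : b (Fin.last m) = 1)
    (hda : ∀ i, IsDyadic (a i)) (hdb : ∀ i, IsDyadic (b i)) :
    ∃ f : Equiv.Perm unitInt, IsThompson f ∧
      ∀ (x : unitInt) (i : Fin (m+1)), (x : ℝ) = a i → ((f x : ℝ) = b i) := by
  classical
  have hgap : ∀ l : Fin m, ∃ uu vv : ℝ, 0 < uu ∧ uu < a l.succ - a l.castSucc ∧ 0 < vv ∧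
      vv < b l.succ - b l.castSucc ∧ IsDyadic uu ∧ (∃ s : ℤ, vv = 2 ^ s * uu) ∧
      (∃ t : ℤ, (b l.succ - b l.castSucc) - vv = 2 ^ t * ((a l.succ - a l.castSucc) - uu)) :=
    fun l => gap_subdiv (sub_pos.mpr (ha (Fin.castSucc_lt_succ (i := l))))
      (sub_pos.mpr (hb (Fin.castSucc_lt_succ (i := l)))) ((hda _).sub (hda _)) ((hdb _).sub (hdb _))
  choose U V hU1 hU2 hV1 hV2 hUd hVs hVt using hgap
  set U' : ℕ → ℝ := fun j => if h : j < m then U ⟨j, h⟩ else 0 with hU'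
  set V' : ℕ → ℝ := fun j => if h : j < m then V ⟨j, h⟩ else 0 with hV'
  set aN : ℕ → ℝ := fun j => a ⟨min j m, Nat.lt_succ_of_le (min_le_right _ _)⟩ with haN
  set bN : ℕ → ℝ := fun j => b ⟨min j m, Nat.lt_succ_of_le (min_le_right _ _)⟩ with hbN
  set ta : ℕ → ℝ := fun c => aN (c/2) + (if c % 2 = 1 then U' (c/2) else 0) with hta
  set tb : ℕ → ℝ := fun c => bN (c/2) + (if c % 2 = 1 then V' (c/2) else 0) with htb
  have haNv : ∀ j (h : j ≤ m), aN j = a ⟨j, Nat.lt_succ_of_le h⟩ := by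
    intro j h; rw [haN]; dsimp only; congr 1
    apply Fin.ext
    show min j m = j
    omega
  have hbNv : ∀ j (h : j ≤ m), bN j = b ⟨j, Nat.lt_succ_of_le h⟩ := by
    intro j h; rw [hbN]; dsimp only; congr 1
    apply Fin.ext
    show min j m = j
    omega
  have hcastv : ∀ (j : ℕ) (h : j < m), (Fin.castSucc ⟨j, h⟩ : Fin (m+1)) = ⟨j, Nat.lt_succ_of_le h.le⟩ := by
    intro j h; apply Fin.ext; simp
  have hsuccv : ∀ (j : ℕ) (h : j < m), (Fin.succ ⟨j, h⟩ : Fin (m+1)) = ⟨j+1, Nat.lt_succ_of_le h⟩ := by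
    intro j h; apply Fin.ext; simp
  have step_a : ∀ c, c < 2*m → ta c < ta (c+1) := by
    intro c hc
    have hdiv : c / 2 < m := by omega
    rw [hta]; dsimp only
    rcases Nat.even_or_odd c with he | ho
    · have h2 : c % 2 = 0 := Nat.even_iff.mp he
      rw [show (c+1)/2 = c/2 by omega, if_neg (by omega : ¬ c % 2 = 1),
        if_pos (by omega : (c+1) % 2 = 1), hU']
      dsimp only
      rw [dif_pos hdiv]
      have := hU1 ⟨c/2, hdiv⟩
      linarith
    · have h2 : c % 2 = 1 := Nat.odd_iff.mp ho
      rw [show (c+1)/2 = c/2+1 by omega, if_pos h2, if_neg (by omega : ¬ (c+1) % 2 = 1), hU']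
      dsimp only
      rw [dif_pos hdiv]
      have h3 := hU2 ⟨c/2, hdiv⟩
      rw [hcastv _ hdiv, hsuccv _ hdiv] at h3
      rw [haNv _ (by omega), haNv _ (by omega)]
      linarith
  have step_b : ∀ c, c < 2*m → tb c < tb (c+1) := by
    intro c hc
    have hdiv : c / 2 < m := by omega
    rw [htb]; dsimp only
    rcases Nat.even_or_odd c with he | ho
    · have h2 : c % 2 = 0 := Nat.even_iff.mp he
      rw [show (c+1)/2 = c/2 by omega, if_neg (by omega : ¬ c % 2 = 1),
        if_pos (by omega : (c+1) % 2 = 1), hV']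
      dsimp only
      rw [dif_pos hdiv]
      have := hV1 ⟨c/2, hdiv⟩
      linarith
    · have h2 : c % 2 = 1 := Nat.odd_iff.mp ho
      rw [show (c+1)/2 = c/2+1 by omega, if_pos h2, if_neg (by omega : ¬ (c+1) % 2 = 1), hV']
      dsimp only
      rw [dif_pos hdiv]
      have h3 := hV2 ⟨c/2, hdiv⟩
      rw [hcastv _ hdiv, hsuccv _ hdiv] at h3
      rw [hbNv _ (by omega), hbNv _ (by omega)]
      linarith
  set t : Fin (2*m+1) → ℝ := fun i => ta i.val with htdef
  set u : Fin (2*m+1) → ℝ := fun i => tb i.val with hudef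
  have hmono_t : StrictMono t := by
    rw [Fin.strictMono_iff_lt_succ]
    intro i
    exact step_a i.val i.isLt
  have hmono_u : StrictMono u := by
    rw [Fin.strictMono_iff_lt_succ]
    intro i
    exact step_b i.val i.isLt
  have ht0 : t 0 = 0 := by
    have e : t 0 = ta 0 := rfl
    rw [e, hta]; dsimp only
    rw [if_neg (by norm_num : ¬ (0:ℕ) % 2 = 1), add_zero]
    rw [show (0:ℕ)/2 = 0 from rfl, haNv 0 (Nat.zero_le m)]
    exact ha0
  have hu0 : u 0 = 0 := by
    have e : u 0 = tb 0 := rfl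
    rw [e, htb]; dsimp only
    rw [if_neg (by norm_num : ¬ (0:ℕ) % 2 = 1), add_zero]
    rw [show (0:ℕ)/2 = 0 from rfl, hbNv 0 (Nat.zero_le m)]
    exact hb0
  have htl : t (Fin.last (2*m)) = 1 := by
    have e : t (Fin.last (2*m)) = ta (2*m) := rfl
    rw [e, hta]; dsimp only
    rw [if_neg (by omega : ¬ (2*m) % 2 = 1), add_zero, show (2*m)/2 = m by omega,
      haNv m le_rfl]
    exact hal
  have hul : u (Fin.last (2*m)) = 1 := by
    have e : u (Fin.last (2*m)) = tb (2*m) := rfl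
    rw [e, htb]; dsimp only
    rw [if_neg (by omega : ¬ (2*m) % 2 = 1), add_zero, show (2*m)/2 = m by omega,
      hbNv m le_rfl]
    exact hbl
  have hdt : ∀ i, IsDyadic (t i) := by
    intro i
    rw [htdef]; dsimp only
    rw [hta]; dsimp only
    have h1 : IsDyadic (aN (i.val / 2)) := by rw [haN]; exact hda _
    have h2 : IsDyadic (if i.val % 2 = 1 then U' (i.val/2) else 0) := by
      split
      · rw [hU']; dsimp only
        split
        · exact hUd _
        · exact isDyadic_zero
      · exact isDyadic_zero
    exact h1.add h2
  have hslope : ∀ l : Fin (2*m), ∃ mm : ℤ, u l.succ - u l.castSucc = 2 ^ mm * (t l.succ - t l.castSucc) := by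
    intro l
    have hc := l.isLt
    set c := l.val with hcv
    have hdiv : c / 2 < m := by omega
    have hvs : (l.succ : Fin (2*m+1)).val = c + 1 := rfl
    have hvc : (l.castSucc : Fin (2*m+1)).val = c := rfl
    rw [htdef, hudef]; dsimp only
    rw [hvs, hvc, hta, htb]; dsimp only
    rcases Nat.even_or_odd c with he | ho
    · have h2 : c % 2 = 0 := Nat.even_iff.mp he
      obtain ⟨sv, hsv⟩ := hVs ⟨c/2, hdiv⟩
      refine ⟨sv, ?_⟩
      rw [show (c+1)/2 = c/2 by omega]
      rw [if_pos (show (c+1) % 2 = 1 by omega), if_pos (show (c+1) % 2 = 1 by omega),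
        if_neg (show ¬ c % 2 = 1 by omega), if_neg (show ¬ c % 2 = 1 by omega), hU', hV']
      dsimp only
      rw [dif_pos hdiv, dif_pos hdiv]
      linear_combination hsv
    · have h2 : c % 2 = 1 := Nat.odd_iff.mp ho
      obtain ⟨tv, htv⟩ := hVt ⟨c/2, hdiv⟩
      refine ⟨tv, ?_⟩
      rw [show (c+1)/2 = c/2+1 by omega]
      rw [if_pos h2, if_pos h2, if_neg (show ¬ (c+1) % 2 = 1 by omega),
        if_neg (show ¬ (c+1) % 2 = 1 by omega), hU', hV']
      dsimp only
      rw [dif_pos hdiv, dif_pos hdiv]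
      rw [hcastv _ hdiv, hsuccv _ hdiv] at htv
      rw [haNv (c/2+1) (by omega), haNv (c/2) (by omega),
        hbNv (c/2+1) (by omega), hbNv (c/2) (by omega), add_zero, add_zero]
      linear_combination htv
  obtain ⟨f, hth, hnd⟩ := thompson_of_seq t u hmono_t ht0 htl hu0 hul hdt hslope
  refine ⟨f, hth, ?_⟩
  intro x i hxi
  have h2i : (2 * i.val : ℕ) < 2*m+1 := by have := i.isLt; omega
  have hteq : t ⟨2*i.val, h2i⟩ = a i := by
    rw [htdef]; dsimp only
    rw [hta]; dsimp only
    rw [if_neg (by omega : ¬ (2*i.val) % 2 = 1), show (2*i.val)/2 = i.val by omega,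
      haNv i.val (by have := i.isLt; omega), add_zero]
  have hueq : u ⟨2*i.val, h2i⟩ = b i := by
    rw [hudef]; dsimp only
    rw [htb]; dsimp only
    rw [if_neg (by omega : ¬ (2*i.val) % 2 = 1), show (2*i.val)/2 = i.val by omega,
      hbNv i.val (by have := i.isLt; omega), add_zero]
  have := hnd x ⟨2*i.val, h2i⟩ (by rw [hteq]; exact hxi)
  rw [this, hueq]

/-- the points `q j = 2^{-(j+1)}`. -/
noncomputable def qpt (j : ℕ) : ℝ := ((2:ℝ)^(j+1))⁻¹

lemma qpt_pos (j : ℕ) : 0 < qpt j := by unfold qpt; positivity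

lemma qpt_half (j : ℕ) : qpt (j+1) = qpt j / 2 := by
  unfold qpt
  rw [pow_succ]
  field_simp

lemma qpt_anti {a b : ℕ} (h : a < b) : qpt b < qpt a := by
  unfold qpt
  rw [← one_div, ← one_div]
  apply one_div_lt_one_div_of_lt (by positivity)
  have : (2:ℕ)^(a+1) < 2^(b+1) := Nat.pow_lt_pow_right (by norm_num) (by omega)
  exact_mod_cast this

lemma qpt_le_half (j : ℕ) : qpt j ≤ 1/2 := by
  rcases Nat.eq_zero_or_pos j with rfl | h
  · unfold qpt; norm_num
  · have := qpt_anti h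
    have : qpt 0 = 1/2 := by unfold qpt; norm_num
    nlinarith [qpt_anti h, this]

lemma qpt_mem (j : ℕ) : qpt j ∈ unitInt :=
  ⟨(qpt_pos j).le, le_trans (qpt_le_half j) (by norm_num)⟩

lemma qpt_dyadic (j : ℕ) : IsDyadic (qpt j) := ⟨1, j+1, by unfold qpt; norm_num⟩

/-- image of the point `qpt d` under the generator `i`. -/
noncomputable def vmap {k : ℕ} (L : List (Fin k × Bool)) (i : Fin k) (d : ℕ) : ℝ :=
  if 1 ≤ d ∧ L[d-1]? = some (i, true) then qpt (d-1)
  else if L[d]? = some (i, false) then qpt (d+1)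
  else if L[d]? = some (i, true) then qpt d + qpt d/4
  else if 1 ≤ d ∧ L[d-1]? = some (i, false) then qpt (d+1) + qpt (d+1)/2
  else qpt d

section vmap
variable {k : ℕ} (L : List (Fin k × Bool))

def RedOK {k : ℕ} (L : List (Fin k × Bool)) : Prop :=
  ∀ (j : ℕ) (x : Fin k) (b : Bool), L[j]? = some (x, b) → L[j+1]? = some (x, !b) → False

lemma vmap_pos (i : Fin k) (d : ℕ) : 0 < vmap L i d := by
  unfold vmap
  split_ifs
  · exact qpt_pos _
  · exact qpt_pos _
  · have := qpt_pos d; linarith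
  · have := qpt_pos (d+1); linarith
  · exact qpt_pos _

lemma vmap_dyadic (i : Fin k) (d : ℕ) : IsDyadic (vmap L i d) := by
  have key : ∀ j : ℕ, IsDyadic (qpt j + qpt j/4) := by
    intro j
    refine ⟨5, j+3, ?_⟩
    unfold qpt
    have h3 : (2:ℝ)^(j+3) = 2^(j+1)*4 := by ring
    rw [h3, eq_comm, div_eq_iff (by positivity)]
    field_simp
    norm_num [pow_succ]
  have key2 : ∀ j : ℕ, IsDyadic (qpt j + qpt j/2) := by
    intro j
    refine ⟨3, j+2, ?_⟩
    unfold qpt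
    have h3 : (2:ℝ)^(j+2) = 2^(j+1)*2 := by ring
    rw [h3, eq_comm, div_eq_iff (by positivity)]
    field_simp
    norm_num [pow_succ]
  unfold vmap
  split_ifs <;> first | exact qpt_dyadic _ | exact key _ | exact key2 _

lemma vmap_lt_one (i : Fin k) : vmap L i 0 < 1 := by
  unfold vmap
  have h0 := qpt_le_half 0
  have h1 := qpt_le_half 1
  have p0 := qpt_pos 0
  have p1 := qpt_pos 1
  split_ifs with c1 c2 c3 c4 <;> first | (exact absurd c1.1 (by norm_num)) | (exact absurd c4.1 (by norm_num)) | linarith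

lemma vmap_R1 (i : Fin k) (j : ℕ) (h : L[j]? = some (i, true)) :
    vmap L i (j+1) = qpt j := by
  unfold vmap
  simp only [Nat.add_sub_cancel]
  rw [if_pos ⟨by omega, h⟩]

lemma vmap_R2 (hred : RedOK L) (i : Fin k) (j : ℕ) (h : L[j]? = some (i, false)) :
    vmap L i j = qpt (j+1) := by
  unfold vmap
  rw [if_neg, if_pos h]
  rintro ⟨hj, hget⟩
  refine hred (j-1) i true hget ?_
  rw [show j-1+1 = j by omega]
  simpa using h

lemma vmap_dec (hred : RedOK L) (i : Fin k) (d : ℕ) : vmap L i (d+1) < vmap L i d := by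
  have pd := qpt_pos d
  have pd1 := qpt_pos (d+1)
  have pd2 := qpt_pos (d+2)
  have hd1 := qpt_half d
  have hd2 := qpt_half (d+1)
  by_cases hT : L[d]? = some (i, true)
  · rw [vmap_R1 L i d hT]
    have hFne : ¬ (L[d]? = some (i, false)) := by rw [hT]; simp
    unfold vmap
    split_ifs with c1
    · obtain ⟨hd', _⟩ := c1
      have h := qpt_half (d-1)
      rw [show d-1+1 = d from by omega] at h
      have := qpt_pos (d-1)
      linarith
    · linarith
  by_cases hF : L[d]? = some (i, false)
  · rw [vmap_R2 L hred i d hF]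
    unfold vmap
    split_ifs with c1 c2 c3 c4
    · obtain ⟨_, hc⟩ := c1
      rw [show d+1-1 = d from by omega] at hc
      rw [hc] at hF; simp at hF
    · exact qpt_anti (by omega)
    · exact (hred d i false hF (by simpa using c3)).elim
    · linarith
    · exact absurd ⟨by omega, by rw [show d+1-1 = d from by omega]; exact hF⟩ c4
  · have hup : vmap L i (d+1) ≤ qpt (d+1) + qpt (d+1)/4 := by
      unfold vmap
      split_ifs with c1 c2 c3 c4
      · obtain ⟨_, hc⟩ := c1
        rw [show d+1-1 = d from by omega] at hc
        exact absurd hc hT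
      · linarith
      · exact le_rfl
      · obtain ⟨_, hc⟩ := c4
        rw [show d+1-1 = d from by omega] at hc
        exact absurd hc hF
      · linarith
    have hlow : qpt (d+1) + qpt (d+1)/2 ≤ vmap L i d := by
      unfold vmap
      split_ifs with c1 c4
      · obtain ⟨hd', _⟩ := c1
        have h := qpt_half (d-1)
        rw [show d-1+1 = d from by omega] at h
        have := qpt_pos (d-1)
        linarith
      · exact le_rfl
      · linarith
    linarith

end vmap

theorem thompson_no_group_law (k : ℕ) (hk : 1 ≤ k)
    (w : FreeGroup (Fin k)) (hw : w ≠ 1) :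
    ∃ f : Fin k → Equiv.Perm unitInt, (∀ i, IsThompson (f i)) ∧
      FreeGroup.lift f w ≠ 1 := by
  classical
  set L : List (Fin k × Bool) := w.toWord with hL
  have hLne : L ≠ [] := by
    intro h
    rw [hL] at h
    exact hw (FreeGroup.toWord_eq_nil_iff.mp h)
  set n : ℕ := L.length with hn
  have hn1 : 1 ≤ n := by rw [hn]; exact List.length_pos_iff.mpr hLne
  have hred : RedOK L := by
    intro j x b h1 h2
    obtain ⟨hj1, e1⟩ := List.getElem?_eq_some_iff.mp h1
    obtain ⟨hj2, e2⟩ := List.getElem?_eq_some_iff.mp h2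
    have hsplit : L = L.take j ++ (x,b) :: (x, !b) :: L.drop (j+2) := by
      conv_lhs => rw [← List.take_append_drop j L]
      congr 1
      rw [List.drop_eq_getElem_cons hj1, e1, List.drop_eq_getElem_cons hj2, e2]
    apply FreeGroup.reduce.not (L₂ := L.take j) (L₃ := L.drop (j+2)) (x := x) (b := b)
    rw [FreeGroup.reduce_toWord, ← hL]
    exact hsplit
  set A : Fin (n+2+1) → ℝ := fun s =>
    if s.val = 0 then 0 else if s.val = n+2 then 1 else qpt (n+1 - s.val) with hA
  set B : Fin k → Fin (n+2+1) → ℝ := fun i s =>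
    if s.val = 0 then 0 else if s.val = n+2 then 1 else vmap L i (n+1 - s.val) with hB
  have hAval : ∀ s : Fin (n+2+1), 1 ≤ s.val → s.val ≤ n+1 → A s = qpt (n+1 - s.val) := by
    intro s h1 h2; rw [hA]; dsimp only; rw [if_neg (by omega), if_neg (by omega)]
  have hA0' : ∀ s : Fin (n+2+1), s.val = 0 → A s = 0 := by
    intro s h; rw [hA]; dsimp only; rw [if_pos h]
  have hA1' : ∀ s : Fin (n+2+1), s.val = n+2 → A s = 1 := by
    intro s h; rw [hA]; dsimp only; rw [if_neg (by omega), if_pos h]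
  have hBval : ∀ (i : Fin k) (s : Fin (n+2+1)), 1 ≤ s.val → s.val ≤ n+1 →
      B i s = vmap L i (n+1 - s.val) := by
    intro i s h1 h2; rw [hB]; dsimp only; rw [if_neg (by omega), if_neg (by omega)]
  have hB0' : ∀ (i : Fin k) (s : Fin (n+2+1)), s.val = 0 → B i s = 0 := by
    intro i s h; rw [hB]; dsimp only; rw [if_pos h]
  have hB1' : ∀ (i : Fin k) (s : Fin (n+2+1)), s.val = n+2 → B i s = 1 := by
    intro i s h; rw [hB]; dsimp only; rw [if_neg (by omega), if_pos h]
  have hcv : ∀ s : Fin (n+2), (Fin.castSucc s).val = s.val := fun s => rfl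
  have hsv : ∀ s : Fin (n+2), (Fin.succ s).val = s.val + 1 := fun s => rfl
  have hmA : StrictMono A := by
    rw [Fin.strictMono_iff_lt_succ]
    intro s
    have hlt : s.val < n+2 := s.isLt
    rcases Nat.eq_zero_or_pos s.val with h0 | h0
    · rw [hA0' _ (by rw [hcv]; exact h0), hAval _ (by rw [hsv]; omega) (by rw [hsv]; omega)]
      exact qpt_pos _
    · by_cases htop : s.val + 1 = n+2
      · rw [hAval _ (by rw [hcv]; omega) (by rw [hcv]; omega), hA1' _ (by rw [hsv]; exact htop)]
        have := qpt_le_half (n+1 - (Fin.castSucc s).val)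
        linarith
      · rw [hAval _ (by rw [hcv]; omega) (by rw [hcv]; omega),
          hAval _ (by rw [hsv]; omega) (by rw [hsv]; omega)]
        apply qpt_anti
        rw [hcv, hsv]
        omega
  have hmB : ∀ i : Fin k, StrictMono (B i) := by
    intro i
    rw [Fin.strictMono_iff_lt_succ]
    intro s
    have hlt : s.val < n+2 := s.isLt
    rcases Nat.eq_zero_or_pos s.val with h0 | h0
    · rw [hB0' _ _ (by rw [hcv]; exact h0), hBval _ _ (by rw [hsv]; omega) (by rw [hsv]; omega)]
      exact vmap_pos _ _ _
    · by_cases htop : s.val + 1 = n+2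
      · rw [hBval _ _ (by rw [hcv]; omega) (by rw [hcv]; omega), hB1' _ _ (by rw [hsv]; exact htop)]
        rw [show n+1 - (Fin.castSucc s).val = 0 by rw [hcv]; omega]
        exact vmap_lt_one L i
      · rw [hBval _ _ (by rw [hcv]; omega) (by rw [hcv]; omega),
          hBval _ _ (by rw [hsv]; omega) (by rw [hsv]; omega)]
        rw [show n+1 - (Fin.castSucc s).val = (n - s.val) + 1 by rw [hcv]; omega,
          show n+1 - (Fin.succ s).val = n - s.val by rw [hsv]; omega]
        exact vmap_dec L hred i (n - s.val)
  have hdA : ∀ s, IsDyadic (A s) := by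
    intro s
    rw [hA]; dsimp only
    split_ifs
    · exact ⟨0, 0, by norm_num⟩
    · exact ⟨1, 0, by norm_num⟩
    · exact qpt_dyadic _
  have hdB : ∀ i s, IsDyadic (B i s) := by
    intro i s
    rw [hB]; dsimp only
    split_ifs
    · exact ⟨0, 0, by norm_num⟩
    · exact ⟨1, 0, by norm_num⟩
    · exact vmap_dyadic L i _
  have hex : ∀ i : Fin k, ∃ f : Equiv.Perm unitInt, IsThompson f ∧
      ∀ (x : unitInt) (s : Fin (n+2+1)), (x : ℝ) = A s → ((f x : ℝ) = B i s) :=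
    fun i => thompson_interp A (B i) hmA (hmB i) (hA0' 0 rfl) (hA1' (Fin.last (n+2)) rfl)
      (hB0' i 0 rfl) (hB1' i (Fin.last (n+2)) rfl) hdA (hdB i)
  choose g hgth hgnode using hex
  have hgq : ∀ (i : Fin k) (d : ℕ), d ≤ n →
      ((g i ⟨qpt d, qpt_mem d⟩ : unitInt) : ℝ) = vmap L i d := by
    intro i d hd
    have hs : n+1-d < n+2+1 := by omega
    have e1 : A ⟨n+1-d, hs⟩ = qpt d := by
      rw [hAval ⟨n+1-d, hs⟩ (by show 1 ≤ n+1-d; omega) (by show n+1-d ≤ n+1; omega)]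
      congr 1
      show n+1-(n+1-d) = d
      omega
    have e2 : B i ⟨n+1-d, hs⟩ = vmap L i d := by
      rw [hBval i ⟨n+1-d, hs⟩ (by show 1 ≤ n+1-d; omega) (by show n+1-d ≤ n+1; omega)]
      congr 1
      show n+1-(n+1-d) = d
      omega
    rw [hgnode i ⟨qpt d, qpt_mem d⟩ ⟨n+1-d, hs⟩ (by rw [e1]), e2]
  set φ : Fin k × Bool → Equiv.Perm unitInt := fun x => cond x.2 (g x.1) (g x.1)⁻¹ with hφ
  have hlift : FreeGroup.lift g w = (L.map φ).prod := by
    conv_lhs => rw [← FreeGroup.mk_toWord (x := w)]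
    rw [FreeGroup.lift_mk, ← hL]
  have hchain : ∀ c j, j + c = n →
      ((((L.drop j).map φ).prod) ⟨qpt n, qpt_mem n⟩ : unitInt) = ⟨qpt j, qpt_mem j⟩ := by
    intro c
    induction c with
    | zero =>
      intro j hj
      have hjn : j = n := by omega
      subst hjn
      rw [hn, List.drop_length]
      simp
    | succ c ih =>
      intro j hj
      have hjn : j < n := by omega
      have hjL : j < L.length := by rw [← hn]; exact hjn
      rw [List.drop_eq_getElem_cons hjL, List.map_cons, List.prod_cons, Equiv.Perm.mul_apply,
        ih (j+1) (by omega)]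
      rcases hLj : L[j]'hjL with ⟨x, bb⟩
      have hLjq : L[j]? = some (x, bb) := by rw [List.getElem?_eq_getElem hjL, hLj]
      rw [hφ]
      cases bb
      · show ((g x)⁻¹ : Equiv.Perm unitInt) _ = _
        rw [Equiv.Perm.inv_def, Equiv.symm_apply_eq]
        symm
        apply Subtype.ext
        rw [hgq x j (by omega)]
        exact vmap_R2 L hred x j hLjq
      · show (g x : Equiv.Perm unitInt) _ = _
        apply Subtype.ext
        rw [hgq x (j+1) (by omega)]
        exact vmap_R1 L x j hLjq
  refine ⟨g, hgth, ?_⟩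
  intro hone
  have hch := hchain n 0 (by omega)
  rw [List.drop_zero, ← hlift, hone] at hch
  have h2 : qpt n = qpt 0 := congrArg Subtype.val hch
  have h3 := qpt_anti (show 0 < n from hn1)
  linarith
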